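/- For every even integer a ≥ 2 that is not a power of 2, β_b(C(2a;1,a)) = a. -/

import Mathlib

/-- The eccentricity of a vertex: maximum distance to any other vertex. -/
noncomputable def eccent {V : Type*} [Fintype V] (G : SimpleGraph V) (v : V) : ℕ :=
  Finset.univ.sup (fun u => G.dist v u)

/-- The diameter of a finite graph: maximum eccentricity. -/
noncomputable def graphDiam {V : Type*} [Fintype V] (G : SimpleGraph V) : ℕ :=
  Finset.univ.sup (fun v => eccent G v)

/-- `f` is an independent broadcast on `G`. -/
def IsIndepBroadcast {V : Type*} [Fintype V] (G : SimpleGraph V) (f : V → ℕ) : Prop :=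
  (∀ v, f v ≤ eccent G v) ∧
  ∀ u v : V, u ≠ v → 0 < f u → 0 < f v → max (f u) (f v) < G.dist u v

/-- The broadcast independence number: maximum cost of an independent broadcast. -/
noncomputable def betaB {V : Type*} [Fintype V] (G : SimpleGraph V) : ℕ :=
  sSup {k | ∃ f : V → ℕ, IsIndepBroadcast G f ∧ ∑ v, f v = k}

/-- The independence number: maximum size of an independent set. -/
noncomputable def alphaNum {V : Type*} [Fintype V] (G : SimpleGraph V) : ℕ :=
  sSup {k | ∃ s : Finset V, (∀ u ∈ s, ∀ v ∈ s, ¬ G.Adj u v) ∧ s.card = k}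

/-- The circulant graph `C(n;1,a)` on vertices `v_0,…,v_{n-1}` with edges
`v_i v_{i+1}` and `v_i v_{i+a}`, indices mod `n`. -/
def circulantGraph (n a : ℕ) : SimpleGraph (Fin n) :=
  SimpleGraph.fromRel (fun i j => (i.val + 1) % n = j.val ∨ (i.val + a) % n = j.val)

set_option linter.unusedSectionVars false
set_option linter.unusedVariables false

namespace CircAux

open scoped Fin.NatCast Fin.CommRing

def dd (a : ℕ) (x : Fin (2*a)) : ℕ := min x.val (2*a - x.val)

def gg (a : ℕ) (x : Fin (2*a)) : ℕ := min (dd a x) (a + 1 - dd a x)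

lemma modHelp {n x y : ℕ} (hx : x < n) (hy : y < n) :
    (x + y) % n = if x + y < n then x + y else x + y - n := by
  split_ifs with h
  · exact Nat.mod_eq_of_lt h
  · rw [Nat.mod_eq_sub_mod (by omega), Nat.mod_eq_of_lt (by omega)]

variable {a : ℕ} [NeZero a]

/-- the chord element -/
def aF (a : ℕ) [NeZero a] : Fin (2*a) := ((a : ℕ) : Fin (2*a))

variable (ha : 2 ≤ a)
include ha

lemma aF_val : (aF a).val = a := Fin.val_cast_of_lt (by omega)

lemma one_val : ((1 : Fin (2*a))).val = 1 := by
  have : (1:ℕ) < 2*a := by omega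
  simp [Fin.val_one', Nat.mod_eq_of_lt this]

lemma val_neg (x : Fin (2*a)) : (-x).val = (2*a - x.val) % (2*a) := by
  rw [Fin.neg_def]

lemma aF_add_aF : aF a + aF a = 0 := by
  apply Fin.ext
  rw [Fin.val_add, aF_val ha]
  have h2 : a + a = 2*a := by ring
  rw [h2, Nat.mod_self]
  simp

lemma neg_aF : -aF a = aF a := by
  rw [neg_eq_iff_add_eq_zero, aF_add_aF ha]

lemma g_zero : gg a 0 = 0 := by
  simp [gg, dd]

lemma dd_le (x : Fin (2*a)) : dd a x ≤ a := by
  have := x.isLt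
  simp only [dd]
  omega

lemma g_neg (x : Fin (2*a)) : gg a (-x) = gg a x := by
  rcases Nat.eq_zero_or_pos x.val with h0 | h0
  · have : x = 0 := Fin.ext h0
    subst this; simp
  · have hv : (-x).val = 2*a - x.val := by
      rw [val_neg ha, Nat.mod_eq_of_lt (by omega)]
    have hx := x.isLt
    simp only [gg, dd, hv]
    omega

lemma g_add_one (x : Fin (2*a)) : gg a (x + 1) ≤ gg a x + 1 := by
  have hx := x.isLt
  have hv : (x + 1).val = (x.val + 1) % (2*a) := by
    rw [Fin.val_add, one_val ha]
  rcases lt_or_ge (x.val + 1) (2*a) with h | h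
  · rw [Nat.mod_eq_of_lt h] at hv
    simp only [gg, dd, hv]; omega
  · have hx1 : x.val + 1 = 2*a := by omega
    have : (x+1).val = 0 := by rw [hv, hx1, Nat.mod_self]
    simp only [gg, dd, this]; omega

lemma g_add_aF (x : Fin (2*a)) : gg a (x + aF a) ≤ gg a x + 1 := by
  have hx := x.isLt
  have hv : (x + aF a).val = (x.val + a) % (2*a) := by
    rw [Fin.val_add, aF_val ha]
  rcases lt_or_ge (x.val + a) (2*a) with h | h
  · rw [Nat.mod_eq_of_lt h] at hv
    simp only [gg, dd, hv]; omega
  · have hv' : (x + aF a).val = x.val + a - 2*a := by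
      rw [hv, Nat.mod_eq_sub_mod (by omega), Nat.mod_eq_of_lt (by omega)]
    simp only [gg, dd, hv']; omega

lemma g_sub_one (x : Fin (2*a)) : gg a (x - 1) ≤ gg a x + 1 := by
  have h1 : x - 1 = -(-x + 1) := by ring
  rw [h1, g_neg ha]
  calc gg a (-x + 1) ≤ gg a (-x) + 1 := g_add_one ha _
    _ = gg a x + 1 := by rw [g_neg ha]


lemma adj_iff {u v : Fin (2*a)} :
    (circulantGraph (2*a) a).Adj u v ↔
      u ≠ v ∧ (v = u + 1 ∨ u = v + 1 ∨ v = u + aF a ∨ u = v + aF a) := by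
  rw [circulantGraph, SimpleGraph.fromRel_adj]
  have h1 : ∀ p q : Fin (2*a), (p.val + 1) % (2*a) = q.val ↔ q = p + 1 := by
    intro p q
    rw [Fin.ext_iff, Fin.val_add, one_val ha]
    exact eq_comm
  have h2 : ∀ p q : Fin (2*a), (p.val + a) % (2*a) = q.val ↔ q = p + aF a := by
    intro p q
    rw [Fin.ext_iff, Fin.val_add, aF_val ha]
    exact eq_comm
  constructor
  · rintro ⟨hne, h⟩
    refine ⟨hne, ?_⟩
    rcases h with (h|h)|(h|h)
    · exact Or.inl ((h1 u v).mp h)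
    · exact Or.inr (Or.inr (Or.inl ((h2 u v).mp h)))
    · exact Or.inr (Or.inl ((h1 v u).mp h))
    · exact Or.inr (Or.inr (Or.inr ((h2 v u).mp h)))
  · rintro ⟨hne, h⟩
    refine ⟨hne, ?_⟩
    rcases h with h|h|h|h
    · exact Or.inl (Or.inl ((h1 u v).mpr h))
    · exact Or.inr (Or.inl ((h1 v u).mpr h))
    · exact Or.inl (Or.inr ((h2 u v).mpr h))
    · exact Or.inr (Or.inr ((h2 v u).mpr h))

lemma g_adj_step {u b v : Fin (2*a)} (h : (circulantGraph (2*a) a).Adj u b) :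
    gg a (v - u) ≤ gg a (v - b) + 1 := by
  rcases ((adj_iff ha).mp h).2 with hb|hb|hb|hb
  · -- b = u + 1, so v - u = (v - b) + 1
    have : v - u = (v - b) + 1 := by rw [hb]; ring
    rw [this]; exact g_add_one ha _
  · -- u = b + 1, so v - u = (v - b) - 1
    have : v - u = (v - b) - 1 := by rw [hb]; ring
    rw [this]; exact g_sub_one ha _
  · -- b = u + aF
    have : v - u = (v - b) + aF a := by rw [hb]; ring
    rw [this]; exact g_add_aF ha _
  · -- u = b + aF : v - u = (v-b) - aF = (v-b) + aF
    have : v - u = (v - b) + -aF a := by rw [hb]; ring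
    rw [this, neg_aF ha]; exact g_add_aF ha _

lemma g_le_walk {u v : Fin (2*a)} (w : (circulantGraph (2*a) a).Walk u v) :
    gg a (v - u) ≤ w.length := by
  induction w with
  | nil => simp [g_zero ha]
  | cons h p ih =>
      rw [SimpleGraph.Walk.length_cons]
      exact (g_adj_step ha h).trans (Nat.add_le_add_right ih 1)

lemma walk_fwd (u : Fin (2*a)) (t : ℕ) :
    ∃ w : (circulantGraph (2*a) a).Walk u (u + (t : Fin (2*a))), w.length ≤ t := by
  induction t with
  | zero =>
      refine ⟨SimpleGraph.Walk.nil.copy rfl (by rw [Nat.cast_zero, add_zero]), ?_⟩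
      rw [SimpleGraph.Walk.length_copy]
      simp
  | succ t ih =>
      obtain ⟨w, hw⟩ := ih
      have hadj : (circulantGraph (2*a) a).Adj (u + (t : Fin (2*a))) (u + ((t+1 : ℕ) : Fin (2*a))) := by
        rw [adj_iff ha]
        have hc : u + ((t+1 : ℕ) : Fin (2*a)) = (u + (t : Fin (2*a))) + 1 := by
          push_cast; ring
        refine ⟨?_, Or.inl hc⟩
        rw [hc]
        intro hcon
        have : (1 : Fin (2*a)) = 0 := by
          have := add_left_cancel (a := u + (t : Fin (2*a))) (b := (1:Fin (2*a))) (c := 0)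
          apply this; rw [add_zero]; exact hcon.symm
        have h1 := one_val ha
        rw [this] at h1
        simp at h1
      exact ⟨w.concat hadj, by rw [SimpleGraph.Walk.length_concat]; omega⟩

lemma walk_d (u v : Fin (2*a)) :
    ∃ w : (circulantGraph (2*a) a).Walk u v, w.length ≤ dd a (v - u) := by
  rcases Nat.eq_zero_or_pos (v-u).val with h0 | h0
  · have hv : v = u := by
      have : v - u = 0 := Fin.ext h0
      rwa [sub_eq_zero] at this
    subst hv
    exact ⟨SimpleGraph.Walk.nil, by simp⟩
  · rcases le_or_gt (v-u).val (2*a - (v-u).val) with h | h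
    · obtain ⟨w, hw⟩ := walk_fwd ha u ((v-u).val)
      have heq : u + (((v-u).val : ℕ) : Fin (2*a)) = v := by
        rw [Fin.cast_val_eq_self]; ring
      refine ⟨w.copy rfl heq, ?_⟩
      rw [SimpleGraph.Walk.length_copy]
      have : dd a (v - u) = (v-u).val := by simp [dd]; omega
      omega
    · obtain ⟨w, hw⟩ := walk_fwd ha v ((u-v).val)
      have heq : v + (((u-v).val : ℕ) : Fin (2*a)) = u := by
        rw [Fin.cast_val_eq_self]; ring
      refine ⟨((w.copy rfl heq).reverse), ?_⟩
      rw [SimpleGraph.Walk.length_reverse, SimpleGraph.Walk.length_copy]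
      have huv : (u - v).val = 2*a - (v-u).val := by
        have h2 : u - v = -(v - u) := by ring
        rw [h2, val_neg ha, Nat.mod_eq_of_lt (by have := (v-u).isLt; omega)]
      have : dd a (v - u) = 2*a - (v-u).val := by simp [dd]; omega
      omega

lemma dist_le_d (u v : Fin (2*a)) :
    (circulantGraph (2*a) a).dist u v ≤ dd a (v - u) := by
  obtain ⟨w, hw⟩ := walk_d ha u v
  exact le_trans (SimpleGraph.dist_le w) hw

lemma dd_sub_aF (x : Fin (2*a)) : dd a (x - aF a) = a - dd a x := by
  have hx := x.isLt
  have hs : x - aF a = x + aF a := by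
    have : x - aF a = x + -aF a := by ring
    rw [this, neg_aF ha]
  rw [hs]
  have hv : (x + aF a).val = (x.val + a) % (2*a) := by
    rw [Fin.val_add, aF_val ha]
  rcases lt_or_ge (x.val + a) (2*a) with h | h
  · rw [Nat.mod_eq_of_lt h] at hv
    simp only [dd, hv]; omega
  · have hv' : (x + aF a).val = x.val + a - 2*a := by
      rw [hv, Nat.mod_eq_sub_mod (by omega), Nat.mod_eq_of_lt (by omega)]
    simp only [dd, hv']; omega

lemma adj_aF (u : Fin (2*a)) : (circulantGraph (2*a) a).Adj u (u + aF a) := by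
  rw [adj_iff ha]
  refine ⟨?_, Or.inr (Or.inr (Or.inl rfl))⟩
  intro hcon
  have : aF a = 0 := by
    have := add_left_cancel (a := u) (b := (0:Fin (2*a))) (c := aF a)
    apply (this _).symm; rw [add_zero]; exact hcon
  have h1 := aF_val ha
  rw [this] at h1
  simp at h1
  omega

lemma dist_le_chord (u v : Fin (2*a)) :
    (circulantGraph (2*a) a).dist u v ≤ a + 1 - dd a (v - u) := by
  obtain ⟨w, hw⟩ := walk_d ha (u + aF a) v
  have hx : v - (u + aF a) = (v - u) - aF a := by ring
  rw [hx, dd_sub_aF ha] at hw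
  have hd := SimpleGraph.dist_le (SimpleGraph.Walk.cons (adj_aF ha u) w)
  rw [SimpleGraph.Walk.length_cons] at hd
  have := dd_le ha (v - u)
  omega

lemma reachable_all (u v : Fin (2*a)) : (circulantGraph (2*a) a).Reachable u v :=
  ⟨(walk_d ha u v).choose⟩

lemma dist_eq (u v : Fin (2*a)) :
    (circulantGraph (2*a) a).dist u v = gg a (v - u) := by
  apply le_antisymm
  · exact le_min (dist_le_d ha u v) (dist_le_chord ha u v)
  · obtain ⟨w, hw⟩ := (reachable_all ha u v).exists_walk_length_eq_dist
    rw [← hw]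
    exact g_le_walk ha w


lemma gg_le_a (x : Fin (2*a)) : gg a x ≤ a :=
  le_trans (min_le_left _ _) (dd_le ha x)

lemma ecc_le (v : Fin (2*a)) : eccent (circulantGraph (2*a) a) v ≤ a := by
  apply Finset.sup_le
  intro u _
  rw [dist_eq ha]
  exact gg_le_a ha _

lemma mod_a_lemma (x : Fin (2*a)) :
    x.val % a = if x.val < a then x.val else x.val - a := by
  have hx := x.isLt
  split_ifs with h
  · exact Nat.mod_eq_of_lt h
  · rw [Nat.mod_eq_sub_mod (by omega), Nat.mod_eq_of_lt (by omega)]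

lemma key_pair {f : Fin (2*a) → ℕ} (hf : IsIndepBroadcast (circulantGraph (2*a) a) f)
    {u v : Fin (2*a)} (huv : u ≠ v) (hfu : 0 < f u) (hfv : 0 < f v) :
    f u ≤ min ((v-u).val % a) (a - (v-u).val % a) ∧
    f v ≤ min ((v-u).val % a) (a - (v-u).val % a) := by
  have hd := hf.2 u v huv hfu hfv
  rw [dist_eq ha] at hd
  have h1 : f u < gg a (v - u) := lt_of_le_of_lt (le_max_left _ _) hd
  have h2 : f v < gg a (v - u) := lt_of_le_of_lt (le_max_right _ _) hd
  have he := mod_a_lemma ha (v - u)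
  have hx := (v - u).isLt
  simp only [gg, dd] at h1 h2
  split_ifs at he <;> rw [he] <;> omega

lemma sum_le_a {f : Fin (2*a) → ℕ} (hf : IsIndepBroadcast (circulantGraph (2*a) a) f) :
    ∑ v, f v ≤ a := by
  classical
  have ha0 : 0 < a := by omega
  set S : Finset (Fin (2*a)) := Finset.univ.filter (fun v => 0 < f v) with hS
  have hsum : ∑ v, f v = ∑ v ∈ S, f v := by
    rw [hS, Finset.sum_filter_of_ne]
    intro v _ hv
    omega
  set A : Fin (2*a) → Finset ℕ :=
    fun v => (Finset.range (f v)).image (fun t => (v.val % a + t) % a) with hA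
  have hmemS : ∀ v ∈ S, 0 < f v := by
    intro v hv
    exact (Finset.mem_filter.mp hv).2
  have hfa : ∀ v, f v ≤ a := fun v => le_trans (hf.1 v) (ecc_le ha v)
  have hcard : ∀ v, (A v).card = f v := by
    intro v
    rw [hA]
    rw [Finset.card_image_of_injOn, Finset.card_range]
    intro s hs t ht hst
    simp only [Finset.coe_range, Set.mem_Iio] at hs ht
    have hmeq : s ≡ t [MOD a] :=
      Nat.ModEq.add_left_cancel' (v.val % a) hst
    have := hfa v
    rwa [Nat.ModEq, Nat.mod_eq_of_lt (by omega), Nat.mod_eq_of_lt (by omega)] at hmeq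
  have hdisj : ∀ u ∈ S, ∀ v ∈ S, u ≠ v → Disjoint (A u) (A v) := by
    intro u hu v hv huv
    rw [Finset.disjoint_left]
    rintro y hyu hyv
    rw [hA] at hyu hyv
    obtain ⟨s, hs, hys⟩ := Finset.mem_image.mp hyu
    obtain ⟨t, ht, hyt⟩ := Finset.mem_image.mp hyv
    rw [Finset.mem_range] at hs ht
    obtain ⟨hku, hkv⟩ := key_pair ha hf huv (hmemS u hu) (hmemS v hv)
    set e := (v - u).val % a with hedef
    -- relation : v.val % a = (u.val % a + e) % a
    have hrel : v.val % a = (u.val % a + e) % a := by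
      have h1 : v = u + (v - u) := by ring
      conv_lhs => rw [h1]
      rw [Fin.val_add, Nat.mod_mod_of_dvd _ ⟨2, by ring⟩, Nat.add_mod]
    -- collision
    have hcol : (u.val % a + s) % a = (u.val % a + (e + t)) % a := by
      rw [hys, ← add_assoc, ← Nat.mod_add_mod (u.val % a + e) a t, ← hrel, hyt]
    have hmeq : s ≡ e + t [MOD a] := Nat.ModEq.add_left_cancel' _ hcol
    have hse : s < e := lt_of_lt_of_le hs (le_trans hku (min_le_left _ _))
    have het : e + t < a := by
      have h1 : t < a - e := lt_of_lt_of_le ht (le_trans hkv (min_le_right _ _))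
      have h2 : e < a := Nat.mod_lt _ ha0
      omega
    rw [Nat.ModEq, Nat.mod_eq_of_lt (by omega), Nat.mod_eq_of_lt het] at hmeq
    omega
  have hsub : ∀ v ∈ S, A v ⊆ Finset.range a := by
    intro v _
    rw [hA]
    intro y hy
    obtain ⟨t, _, hyt⟩ := Finset.mem_image.mp hy
    rw [Finset.mem_range, ← hyt]
    exact Nat.mod_lt _ ha0
  calc ∑ v, f v = ∑ v ∈ S, f v := hsum
    _ = ∑ v ∈ S, (A v).card := by
        apply Finset.sum_congr rfl
        intro v _
        exact (hcard v).symm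
    _ = (S.biUnion A).card := (Finset.card_biUnion hdisj).symm
    _ ≤ (Finset.range a).card := by
        apply Finset.card_le_card
        intro y hy
        obtain ⟨v, hv, hyv⟩ := Finset.mem_biUnion.mp hy
        exact hsub v hv hyv
    _ = a := Finset.card_range a


lemma gg_of_small {t : ℕ} (h1 : 0 < t) (h2 : 2*t ≤ a) : gg a ((t : ℕ) : Fin (2*a)) = t := by
  have hv : (((t : ℕ) : Fin (2*a))).val = t := Fin.val_cast_of_lt (by omega)
  simp only [gg, dd, hv]
  omega

lemma ecc_ge (v : Fin (2*a)) {t : ℕ} (h1 : 0 < t) (h2 : 2*t ≤ a) :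
    t ≤ eccent (circulantGraph (2*a) a) v := by
  have hle : (circulantGraph (2*a) a).dist v (v + ((t : ℕ) : Fin (2*a))) ≤
      eccent (circulantGraph (2*a) a) v := Finset.le_sup (Finset.mem_univ _)
  rw [dist_eq ha, add_sub_cancel_left, gg_of_small ha h1 h2] at hle
  exact hle

lemma exists_broadcast {m k : ℕ} (hm3 : 3 ≤ m) (hodd : ¬ 2 ∣ m) (hk : 0 < k)
    (hmk : m * k = a) :
    ∃ f : Fin (2*a) → ℕ, IsIndepBroadcast (circulantGraph (2*a) a) f ∧ ∑ v, f v = a := by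
  classical
  obtain ⟨r, hr⟩ : ∃ r, m = 2*r + 1 := ⟨m / 2, by omega⟩
  have hr1 : 1 ≤ r := by omega
  have hkr : 2*k*r + k = a := by rw [← hmk, hr]; ring
  have hka : 3*k ≤ a := by
    calc 3*k ≤ m*k := Nat.mul_le_mul_right k hm3
    _ = a := hmk
  set pos : ℕ → Fin (2*a) := fun j => ((2*k*j : ℕ) : Fin (2*a)) with hpos
  have hposval : ∀ j < m, (pos j).val = 2*k*j := by
    intro j hj
    have h1 : 2*k*j < 2*a := by
      have h2 : 2*k*j ≤ 2*k*(m-1) := Nat.mul_le_mul_left _ (by omega)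
      have h3 : 2*k*(m-1) = 2*a - 2*k := by rw [Nat.mul_sub, ← hmk]; ring_nf
      omega
    exact Fin.val_cast_of_lt h1
  set S₀ : Finset (Fin (2*a)) := (Finset.range m).image pos with hS₀
  have hinj : Set.InjOn pos (Finset.range m) := by
    intro i hi j hj hij
    simp only [Finset.coe_range, Set.mem_Iio] at hi hj
    have h1 := hposval i hi
    have h2 := hposval j hj
    rw [hij] at h1
    have : 2*k*i = 2*k*j := by omega
    exact Nat.eq_of_mul_eq_mul_left (by omega) this
  set f : Fin (2*a) → ℕ := fun v => if v ∈ S₀ then k else 0 with hfdef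
  -- the crucial distance bound
  have hdist : ∀ i < m, ∀ j < m, i ≠ j → k < gg a (pos j - pos i) := by
    intro i hi j hj hij
    have hvi := hposval i hi
    have hvj := hposval j hj
    have hval : (pos j - pos i).val = (2*a - 2*k*i + 2*k*j) % (2*a) := by
      rw [Fin.sub_def, hvi, hvj]
    have hia : 2*k*i ≤ 2*a - 2*k := by
      have h1 : 2*k*i ≤ 2*k*(m-1) := Nat.mul_le_mul_left _ (by omega)
      have h2 : 2*k*(m-1) = 2*a - 2*k := by
        rw [Nat.mul_sub, ← hmk]; ring_nf
      omega
    have hja : 2*k*j ≤ 2*a - 2*k := by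
      have h1 : 2*k*j ≤ 2*k*(m-1) := Nat.mul_le_mul_left _ (by omega)
      have h2 : 2*k*(m-1) = 2*a - 2*k := by
        rw [Nat.mul_sub, ← hmk]; ring_nf
      omega
    -- dd bounds
    have hdd : 2*k ≤ dd a (pos j - pos i) ∧ dd a (pos j - pos i) ≤ a - k := by
      rcases lt_or_gt_of_ne hij with hlt | hlt
      · -- i < j : val = 2k(j-i)
        have hsub : 2*k*(j-i) = 2*k*j - 2*k*i := Nat.mul_sub _ _ _
        have hmono : 2*k*i ≤ 2*k*j := Nat.mul_le_mul_left _ (by omega)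
        have hv2 : (pos j - pos i).val = 2*k*(j-i) := by
          rw [hval]
          have he : 2*a - 2*k*i + 2*k*j = 2*a + 2*k*(j-i) := by omega
          rw [he, Nat.add_mod_left, Nat.mod_eq_of_lt (by omega)]
        have hd1 : 2*k ≤ 2*k*(j-i) := by
          have := Nat.mul_le_mul_left (2*k) (show 1 ≤ j - i by omega)
          omega
        -- distinguish j - i ≤ r or ≥ r+1
        rcases le_or_gt (j-i) r with hcase | hcase
        · have h3 : 2*k*(j-i) ≤ 2*k*r := Nat.mul_le_mul_left _ hcase
          have h4 : 2*k*(j-i) ≤ 2*a := by omega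
          simp only [dd, hv2]
          omega
        · have h3 : 2*k*(r+1) ≤ 2*k*(j-i) := Nat.mul_le_mul_left _ (by omega)
          have h5 : 2*k*(r+1) = 2*k*r + 2*k := by ring
          have h6 : 2*k*(j-i) ≤ 2*a - 2*k := by
            have := Nat.mul_le_mul_left (2*k) (show j - i ≤ m - 1 by omega)
            have h2 : 2*k*(m-1) = 2*a - 2*k := by
              rw [Nat.mul_sub, ← hmk]; ring_nf
            omega
          simp only [dd, hv2]
          omega
      · -- j < i : val = 2a - 2k(i-j)
        have hsub : 2*k*(i-j) = 2*k*i - 2*k*j := Nat.mul_sub _ _ _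
        have hmono : 2*k*j ≤ 2*k*i := Nat.mul_le_mul_left _ (by omega)
        have hd1 : 2*k ≤ 2*k*(i-j) := by
          have := Nat.mul_le_mul_left (2*k) (show 1 ≤ i - j by omega)
          omega
        have h6 : 2*k*(i-j) ≤ 2*a - 2*k := by
          have := Nat.mul_le_mul_left (2*k) (show i - j ≤ m - 1 by omega)
          have h2 : 2*k*(m-1) = 2*a - 2*k := by
            rw [Nat.mul_sub, ← hmk]; ring_nf
          omega
        have hv2 : (pos j - pos i).val = 2*a - 2*k*(i-j) := by
          rw [hval]
          have he : 2*a - 2*k*i + 2*k*j = 2*a - 2*k*(i-j) := by omega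
          rw [he, Nat.mod_eq_of_lt (by omega)]
        rcases le_or_gt (i-j) r with hcase | hcase
        · have h3 : 2*k*(i-j) ≤ 2*k*r := Nat.mul_le_mul_left _ hcase
          simp only [dd, hv2]
          omega
        · have h3 : 2*k*(r+1) ≤ 2*k*(i-j) := Nat.mul_le_mul_left _ (by omega)
          have h5 : 2*k*(r+1) = 2*k*r + 2*k := by ring
          simp only [dd, hv2]
          omega
    simp only [gg]
    omega
  refine ⟨f, ⟨?_, ?_⟩, ?_⟩
  · -- f v ≤ eccent
    intro v
    simp only [hfdef]
    split_ifs with h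
    · exact ecc_ge ha v hk (by omega)
    · exact Nat.zero_le _
  · -- pair condition
    intro u v huv hfu hfv
    have hu : u ∈ S₀ := by
      by_contra h
      simp only [hfdef, if_neg h] at hfu
      omega
    have hv : v ∈ S₀ := by
      by_contra h
      simp only [hfdef, if_neg h] at hfv
      omega
    obtain ⟨i, hi, hiu⟩ := Finset.mem_image.mp hu
    obtain ⟨j, hj, hjv⟩ := Finset.mem_image.mp hv
    rw [Finset.mem_range] at hi hj
    have hij : i ≠ j := by
      rintro rfl
      rw [← hiu, ← hjv] at huv
      exact huv rfl
    have hfu' : f u = k := by simp only [hfdef]; simp [hu]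
    have hfv' : f v = k := by simp only [hfdef]; simp [hv]
    rw [hfu', hfv', max_self, dist_eq ha, ← hiu, ← hjv]
    exact hdist i hi j hj hij
  · -- total cost
    simp only [hfdef]
    rw [Finset.sum_ite_mem, Finset.univ_inter, Finset.sum_const, smul_eq_mul]
    rw [hS₀, Finset.card_image_of_injOn hinj, Finset.card_range]
    rw [hmk]

end CircAux


theorem stmt5 (a : ℕ) (ha : 2 ≤ a) (heven : Even a) (hnp : ∀ p : ℕ, a ≠ 2 ^ p) :
    betaB (circulantGraph (2 * a) a) = a := by
  classical
  haveI : NeZero a := ⟨by omega⟩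
  set Q : Set ℕ := {k | ∃ f : Fin (2*a) → ℕ,
    IsIndepBroadcast (circulantGraph (2*a) a) f ∧ ∑ v, f v = k} with hQ
  have hub : ∀ x ∈ Q, x ≤ a := by
    rintro x ⟨f, hf, rfl⟩
    exact CircAux.sum_le_a ha hf
  have hne : (0 : ℕ) ∈ Q := by
    refine ⟨fun _ => 0, ⟨fun v => Nat.zero_le _, fun u v _ h => absurd h (by simp)⟩, by simp⟩
  -- odd divisor
  have ha0 : a ≠ 0 := by omega
  obtain ⟨m, hm⟩ : ∃ m, m = a / 2 ^ a.factorization 2 := ⟨_, rfl⟩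
  have hdvd : m ∣ a := by rw [hm]; exact Nat.ordCompl_dvd a 2
  have hodd : ¬ 2 ∣ m := by rw [hm]; exact Nat.not_dvd_ordCompl Nat.prime_two ha0
  have hm1 : m ≠ 1 := by
    intro h
    apply hnp (a.factorization 2)
    have h2 := Nat.ordProj_mul_ordCompl_eq_self a 2
    rw [← hm, h, mul_one] at h2
    exact h2.symm
  have hm0 : m ≠ 0 := by
    intro h
    rw [h] at hodd
    exact hodd ⟨0, rfl⟩
  have hmod : m % 2 = 1 := Nat.two_dvd_ne_zero.mp hodd
  have hm3 : 3 ≤ m := by omega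
  obtain ⟨k, hk⟩ : ∃ k, k = a / m := ⟨_, rfl⟩
  have hmk : m * k = a := by rw [hk]; exact Nat.mul_div_cancel' hdvd
  have hkpos : 0 < k := by
    rcases Nat.eq_zero_or_pos k with h | h
    · rw [h, mul_zero] at hmk; omega
    · exact h
  obtain ⟨f, hf, hsum⟩ := CircAux.exists_broadcast ha hm3 hodd hkpos hmk
  have hmem : a ∈ Q := ⟨f, hf, hsum⟩
  have h1 : betaB (circulantGraph (2*a) a) = sSup Q := rfl
  rw [h1]
  apply le_antisymm
  · exact csSup_le ⟨0, hne⟩ hub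
  · exact le_csSup ⟨a, hub⟩ hmem
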